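/- For any real p>1 and any integer m with m > p²/(p−1), the inequality m·p^{m−1} − m·p^{m−2} − p^m + 1 > 0 holds; consequently, under the geometric scoring rule with parameter p and m candidates, in the profile of m−1 races where candidate a finishes second in every race and each other candidate finishes first exactly once, a strictly beats every other candidate. -/

import Mathlib

/-- Total score of candidate `a`: in race `i`, `P i` sends each candidate to their
(0-indexed) finishing position, which is worth `s` points. -/
def TotalScore {n k : ℕ} (s : Fin k → ℝ) (P : Fin n → Equiv.Perm (Fin k)) (a : Fin k) : ℝ :=
  ∑ i, s (P i a)

/-- For `p > 1` and `m > p²/(p-1)`: the inequality `m·p^(m-1) - m·p^(m-2) - p^m + 1 > 0`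
holds; consequently, under the geometric rule (position `j`, 0-indexed, worth `p^(m-1-j)`),
in the profile of `m-1` races where candidate `a` is second in every race and every other
candidate is first exactly once, `a` strictly beats every other candidate. -/
theorem stmt5 (p : ℝ) (hp : 1 < p) (m : ℕ) (hm : (m : ℝ) > p ^ 2 / (p - 1)) :
    ((m : ℝ) * p ^ (m - 1) - (m : ℝ) * p ^ (m - 2) - p ^ m + 1 > 0) ∧
    ∃ P : Fin (m-1) → Equiv.Perm (Fin m), ∃ a : Fin m,
      (∀ i, (P i a : ℕ) = 1) ∧
      (∀ b, b ≠ a → ∃! i, (P i b : ℕ) = 0) ∧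
      (∀ b, b ≠ a →
        TotalScore (fun j : Fin m => p ^ (m - 1 - (j : ℕ))) P b <
          TotalScore (fun j : Fin m => p ^ (m - 1 - (j : ℕ))) P a) := by
  have hp0 : (0:ℝ) < p := by linarith
  have hp1 : (0:ℝ) < p - 1 := by linarith
  have hm5 : 5 ≤ m := by
    have h4 : (4:ℝ) ≤ p ^ 2 / (p - 1) := by
      rw [le_div_iff₀ hp1]; nlinarith [sq_nonneg (p - 2)]
    have h5 : (4:ℝ) < (m:ℝ) := lt_of_le_of_lt h4 hm
    have : 4 < m := by exact_mod_cast h5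
    omega
  have h1 : p ^ 2 < (m:ℝ) * (p - 1) := (div_lt_iff₀ hp1).mp hm
  have key : (m : ℝ) * p ^ (m - 1) - (m : ℝ) * p ^ (m - 2) - p ^ m + 1 > 0 := by
    have h2 : p ^ m = p ^ 2 * p ^ (m - 2) := by rw [← pow_add]; congr 1; omega
    have h3 : p ^ (m - 1) = p * p ^ (m - 2) := by rw [← pow_succ']; congr 1; omega
    have hpow : (0:ℝ) < p ^ (m - 2) := pow_pos hp0 _
    rw [h2, h3]
    nlinarith [mul_pos (sub_pos.mpr h1) hpow]
  refine ⟨key, ?_⟩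
  obtain ⟨n, rfl⟩ : ∃ n, m = n + 2 := ⟨m - 2, by omega⟩
  rw [show n + 2 - 1 = n + 1 from rfl, show n + 2 - 2 = n from rfl] at key
  push_cast at key
  show ∃ P : Fin (n+1) → Equiv.Perm (Fin (n+2)), ∃ a : Fin (n+2),
      (∀ i, (P i a : ℕ) = 1) ∧
      (∀ b, b ≠ a → ∃! i, (P i b : ℕ) = 0) ∧
      (∀ b, b ≠ a →
        TotalScore (fun j : Fin (n+2) => p ^ (n + 1 - (j : ℕ))) P b <
          TotalScore (fun j : Fin (n+2) => p ^ (n + 1 - (j : ℕ))) P a)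
  set P : Fin (n+1) → Equiv.Perm (Fin (n+2)) := fun i =>
    ((finSuccEquiv (n+1)).trans
      ((Equiv.optionCongr (Equiv.addRight i)).trans (finSuccEquiv (n+1)).symm)).trans
      (Equiv.swap 0 1) with hPdef
  have hP0 : ∀ i, P i 0 = 1 := by
    intro i
    simp [hPdef, Equiv.swap_apply_left]
  have hPs : ∀ (i : Fin (n+1)) (j : Fin (n+1)),
      P i j.succ = Equiv.swap 0 1 (j + i).succ := by
    intro i j
    simp [hPdef]
  refine ⟨P, 0, ?_, ?_, ?_⟩
  · intro i
    rw [hP0]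
    simp
  · intro b hb
    obtain ⟨j, rfl⟩ := Fin.eq_succ_of_ne_zero hb
    refine ⟨-j, ?_, ?_⟩
    · show ((P (-j)) j.succ : ℕ) = 0
      rw [hPs]
      have h00 : j + -j = 0 := add_neg_cancel j
      rw [h00, Fin.succ_zero_eq_one, Equiv.swap_apply_right]
      simp
    · intro i hi
      rw [hPs] at hi
      have h0 : Equiv.swap (0 : Fin (n+2)) 1 (j + i).succ = 0 := by
        apply Fin.ext
        simpa using hi
      have h2 : (j + i).succ = (1 : Fin (n+2)) := by
        have := congrArg (Equiv.swap (0 : Fin (n+2)) 1) h0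
        simpa [Equiv.swap_apply_self, Equiv.swap_apply_left] using this
      have h3 : j + i = 0 := by
        apply Fin.succ_injective
        rw [h2, Fin.succ_zero_eq_one]
      exact eq_neg_of_add_eq_zero_right h3
  · intro b hb
    obtain ⟨j, rfl⟩ := Fin.eq_succ_of_ne_zero hb
    have hA : TotalScore (fun j : Fin (n+2) => p ^ (n + 1 - (j:ℕ))) P 0
        = ((n:ℝ) + 1) * p ^ n := by
      unfold TotalScore
      simp only [hP0]
      simp [Finset.sum_const, Finset.card_univ, nsmul_eq_mul]
      try push_cast
      try ring
    have hB : TotalScore (fun j : Fin (n+2) => p ^ (n + 1 - (j:ℕ))) P j.succ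
        = p ^ (n+1) + ∑ t ∈ Finset.range n, p ^ t := by
      unfold TotalScore
      have step1 : ∑ i : Fin (n+1), p ^ (n + 1 - ((P i j.succ : Fin (n+2)) : ℕ))
          = ∑ t : Fin (n+1),
              p ^ (n + 1 - ((Equiv.swap (0:Fin (n+2)) 1 t.succ : Fin (n+2)) : ℕ)) := by
        rw [← Equiv.sum_comp (Equiv.addLeft j)
          (fun t => p ^ (n + 1 - ((Equiv.swap (0:Fin (n+2)) 1 t.succ : Fin (n+2)) : ℕ)))]
        refine Finset.sum_congr rfl fun i _ => ?_
        rw [hPs]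
        simp
      rw [step1, Fin.sum_univ_succ]
      have hfix : ∀ t : Fin n,
          Equiv.swap (0:Fin (n+2)) 1 t.succ.succ = t.succ.succ := by
        intro t
        apply Equiv.swap_apply_of_ne_of_ne
        · exact Fin.succ_ne_zero _
        · intro h
          have := congrArg Fin.val h
          simp [Fin.val_succ] at this
      have h0term : Equiv.swap (0:Fin (n+2)) 1 (Fin.succ (0 : Fin (n+1))) = 0 := by
        rw [Fin.succ_zero_eq_one, Equiv.swap_apply_right]
      rw [h0term]
      simp only [hfix, Fin.val_succ, Fin.val_zero]
      have hrw : ∀ x : Fin n, n + 1 - ((x:ℕ) + 1 + 1) = n - 1 - (x:ℕ) := fun x => by omega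
      simp only [Nat.sub_zero, hrw]
      rw [Fin.sum_univ_eq_sum_range (fun t => p ^ (n - 1 - t)),
        Finset.sum_range_reflect (fun t => p ^ t) n]
    rw [hA, hB, ← mul_lt_mul_iff_of_pos_right hp1]
    have hgs : (∑ i ∈ Finset.range n, p ^ i) * (p - 1) = p ^ n - 1 := geom_sum_mul p n
    have hy : p ^ (n+1) = p ^ n * p := pow_succ p n
    have hx : p ^ (n+2) = p ^ (n+1) * p := pow_succ p (n+1)
    rw [hy] at key ⊢
    rw [hx, hy] at key
    nlinarith [hgs, key]
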